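/- Let κ be an infinite regular cardinal and G a group of cardinality κ. Then the κ-ballean of G is not so-bounded: there exists a function f : G → ℝ that is slowly oscillating with respect to the κ-ballean but, for every B ⊆ G with |B| < κ, f is unbounded on G∖B. -/

import Mathlib

universe u

/-- The ball `E_F[x] = {x} ∪ Fx` of the `κ`-ballean of a group. -/
def grpBall {G : Type*} [Group G] (F : Set G) (x : G) : Set G :=
  insert x ((fun g => g * x) '' F)

open Cardinal Set Ordinal

private theorem mk_closure_lt {G : Type u} [Group G] {s : Set G} {κ : Cardinal.{u}}
    (hκ : ℵ₀ < κ) (hs : #s < κ) : #(Subgroup.closure s) < κ := by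
  classical
  let m : List (s × Bool) → G := fun l =>
    (l.map fun p => if p.2 then (p.1 : G) else (p.1 : G)⁻¹).prod
  have hmem : ∀ l, m l ∈ Subgroup.closure s := by
    intro l
    refine list_prod_mem ?_
    intro y hy
    simp only [List.mem_map] at hy
    obtain ⟨p, -, rfl⟩ := hy
    by_cases hb : p.2 <;> simp only [hb, if_true, if_false, Bool.false_eq_true]
    · exact Subgroup.subset_closure p.1.2
    · exact inv_mem (Subgroup.subset_closure p.1.2)
  have hinv : ∀ l : List (s × Bool), ∃ l', m l' = (m l)⁻¹ := by
    intro l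
    induction l with
    | nil => exact ⟨[], by simp [m]⟩
    | cons p l ih =>
      obtain ⟨l', hl'⟩ := ih
      refine ⟨l' ++ [(p.1, !p.2)], ?_⟩
      have key : ∀ (l1 l2 : List (↥s × Bool)), m (l1 ++ l2) = m l1 * m l2 := by
        intro l1 l2
        simp [m]
      rw [key, hl']
      simp only [m, List.map_cons, List.prod_cons, List.map_nil, List.prod_nil, mul_inv_rev]
      rcases p with ⟨a, b⟩
      cases b <;> simp
  have hsurj : Function.Surjective (fun l => (⟨m l, hmem l⟩ : Subgroup.closure s)) := by
    rintro ⟨x, hx⟩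
    have : ∃ l, m l = x := by
      induction hx using Subgroup.closure_induction with
      | mem y hy => exact ⟨[(⟨y, hy⟩, true)], by simp [m]⟩
      | one => exact ⟨[], by simp [m]⟩
      | mul y z hy hz ihy ihz =>
        obtain ⟨l1, h1⟩ := ihy
        obtain ⟨l2, h2⟩ := ihz
        exact ⟨l1 ++ l2, by simp only [m, List.map_append, List.prod_append]; rw [← h1, ← h2]⟩
      | inv y hy ihy =>
        obtain ⟨l, hl⟩ := ihy
        obtain ⟨l', hl'⟩ := hinv l
        exact ⟨l', by rw [hl', hl]⟩
    obtain ⟨l, hl⟩ := this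
    exact ⟨l, Subtype.ext hl⟩
  calc #(Subgroup.closure s) ≤ #(List (s × Bool)) := mk_le_of_surjective hsurj
    _ ≤ max ℵ₀ #(↥s × Bool) := mk_list_le_max _
    _ < κ := by
        refine max_lt hκ ?_
        have : #(↥s × Bool) = #s * 2 := by
          rw [Cardinal.mk_prod, Cardinal.mk_bool, Cardinal.lift_id']
          simp
        rw [this]
        exact Cardinal.mul_lt_of_lt hκ.le hs ((Cardinal.nat_lt_aleph0 2).trans hκ)


private theorem caseA {G : Type u} [Group G] (κ : Cardinal.{u}) (hreg : κ.IsRegular)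
    (hG : Cardinal.mk G = κ) (hκ : ℵ₀ < κ) :
    ∃ f : G → ℝ,
      (∀ F : Set G, Cardinal.mk F < κ → ∀ ε : ℝ, 0 < ε →
        ∃ B : Set G, Cardinal.mk B < κ ∧
          ∀ x ∉ B, ∀ a ∈ grpBall F x, ∀ b ∈ grpBall F x, |f a - f b| < ε) ∧
      (∀ B : Set G, Cardinal.mk B < κ → ∀ C : ℝ, ∃ x : G, x ∉ B ∧ C < |f x|) := by
  classical
  haveI : IsWellOrder κ.ord.ToType (· < ·) := isWellOrder_lt
  have hlim : Order.IsSuccLimit κ.ord := Cardinal.isSuccLimit_ord hreg.aleph0_le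
  obtain ⟨e⟩ : Nonempty (G ≃ κ.ord.ToType) :=
    Cardinal.eq.1 (by rw [hG, Cardinal.mk_toType, Cardinal.card_ord])
  set idx : G → Ordinal.{u} := fun x => Ordinal.typein (α := κ.ord.ToType) (· < ·) (e x) with hidxdef
  have hidx : ∀ x, idx x < κ.ord := fun x => Ordinal.typein_lt_self (e x)
  have hsucc : ∀ o : Ordinal.{u}, o < o + 1 := fun o => by
    rw [Ordinal.add_one_eq_succ]; exact Order.lt_succ o
  set H : Ordinal.{u} → Subgroup G := fun β => Subgroup.closure {y : G | idx y < β} with hHdef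
  have Hmono : ∀ {α β : Ordinal}, α ≤ β → H α ≤ H β :=
    fun h => Subgroup.closure_mono (fun y (hy : idx y < _) => show idx y < _ from lt_of_lt_of_le hy h)
  have hmemidx : ∀ x : G, x ∈ H (idx x + 1) :=
    fun x => Subgroup.subset_closure (hsucc (idx x))
  set rnk : G → Ordinal.{u} := fun x => sInf {α : Ordinal | x ∈ H (α + 1)} with hrnkdef
  have hrnkmem : ∀ x, x ∈ H (rnk x + 1) := by
    intro x
    have h1 : rnk x ∈ {α : Ordinal | x ∈ H (α + 1)} := csInf_mem ⟨idx x, hmemidx x⟩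
    exact h1
  have hrnkle : ∀ {x : G} {α}, x ∈ H (α + 1) → rnk x ≤ α := by
    intro x α h
    exact csInf_le' (show α ∈ {α : Ordinal | x ∈ H (α + 1)} from h)
  have hrnkidx : ∀ x, rnk x ≤ idx x := fun x => hrnkle (hmemidx x)
  have hrnkord : ∀ x, rnk x < κ.ord := fun x => lt_of_le_of_lt (hrnkidx x) (hidx x)
  have lemle : ∀ {β : Ordinal} {g x : G}, g ∈ H β → x ∉ H β → rnk (g * x) ≤ rnk x := by
    intro β g x hg hx
    rcases le_or_gt β (rnk x + 1) with h | h
    · exact hrnkle (mul_mem (Hmono h hg) (hrnkmem x))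
    · exact absurd (Hmono h.le (hrnkmem x)) hx
  have lemeq : ∀ {β : Ordinal} {g x : G}, g ∈ H β → x ∉ H β → rnk (g * x) = rnk x := by
    intro β g x hg hx
    have hgx : g * x ∉ H β := fun h => hx (by simpa using mul_mem (inv_mem hg) h)
    refine le_antisymm (lemle hg hx) ?_
    have := lemle (inv_mem hg) hgx
    rwa [inv_mul_cancel_left] at this
  have cardH : ∀ β : Ordinal, β < κ.ord → #(H β) < κ := by
    intro β hβ
    refine mk_closure_lt hκ ?_
    have hβ' : β < Ordinal.type (α := κ.ord.ToType) (· < ·) := by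
      rwa [Ordinal.type_toType]
    set b0 : κ.ord.ToType := Ordinal.enum (· < ·) ⟨β, hβ'⟩ with hb0
    have hj : Function.Injective
        (fun y : {y : G | idx y < β} => (⟨e y.1, by
          have : Ordinal.typein (α := κ.ord.ToType) (· < ·) (e y.1) <
              Ordinal.typein (α := κ.ord.ToType) (· < ·) b0 := by
            rw [hb0, Ordinal.typein_enum]
            exact y.2
          exact (Ordinal.typein_lt_typein (· < ·)).1 this⟩ :
          {c : κ.ord.ToType // c < b0})) := by
      intro y z h
      apply Subtype.ext
      exact e.injective (congrArg Subtype.val h)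
    calc #{y : G | idx y < β} ≤ #{c : κ.ord.ToType // c < b0} := mk_le_of_injective hj
      _ = (Ordinal.typein (α := κ.ord.ToType) (· < ·) b0).card := Ordinal.card_typein b0
      _ = β.card := by rw [hb0, Ordinal.typein_enum]
      _ < κ := Cardinal.lt_ord.1 hβ
  -- the rank, as an element of κ.ord.ToType
  have hrnktype : ∀ x : G, rnk x < Ordinal.type (α := κ.ord.ToType) (· < ·) := by
    intro x
    rw [Ordinal.type_toType]
    exact hrnkord x
  set rT : G → κ.ord.ToType := fun x => Ordinal.enum (· < ·) ⟨rnk x, hrnktype x⟩ with hrT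
  have hrTty : ∀ x, Ordinal.typein (α := κ.ord.ToType) (· < ·) (rT x) = rnk x :=
    fun x => Ordinal.typein_enum _ _
  have hrTeq : ∀ {x y : G}, rT x = rT y → rnk x = rnk y := by
    intro x y h
    rw [← hrTty x, ← hrTty y, h]
  set R : Set κ.ord.ToType := Set.range rT with hR
  set fib : G → ↥R := fun x => ⟨rT x, Set.mem_range_self x⟩ with hfib
  -- the rank classes partition G into < κ pieces each of size < κ, so #R = κ
  have hfibH : ∀ (a : ↥R) (x : {x : G // fib x = a}),
      x.1 ∈ H (Ordinal.typein (α := κ.ord.ToType) (· < ·) a.1 + 1) := by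
    intro a x
    have : rnk x.1 = Ordinal.typein (α := κ.ord.ToType) (· < ·) a.1 := by
      rw [← hrTty x.1]
      exact congrArg _ (congrArg Subtype.val x.2)
    rw [← this]
    exact hrnkmem x.1
  have hmkR : #R = κ := by
    have hle : #R ≤ κ := by
      calc #R ≤ #(κ.ord.ToType) := Cardinal.mk_subtype_le _
        _ = κ := by rw [Cardinal.mk_toType, Cardinal.card_ord]
    refine le_antisymm hle ?_
    by_contra hlt
    push_neg at hlt
    have hsum : #G = Cardinal.sum (fun a : ↥R => #{x : G // fib x = a}) := by
      rw [← Cardinal.mk_sigma]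
      exact Cardinal.mk_congr (Equiv.sigmaFiberEquiv fib).symm
    have hfiblt : ∀ a : ↥R, #{x : G // fib x = a} < κ := by
      intro a
      have h1 : Ordinal.typein (α := κ.ord.ToType) (· < ·) a.1 + 1 < κ.ord := by
        rw [Ordinal.add_one_eq_succ]
        exact hlim.succ_lt (Ordinal.typein_lt_self a.1)
      calc #{x : G // fib x = a}
          ≤ #(H (Ordinal.typein (α := κ.ord.ToType) (· < ·) a.1 + 1)) := by
            refine mk_le_of_injective
              (f := fun x : {x : G // fib x = a} =>
                (⟨x.1, hfibH a x⟩ : ↥(H (Ordinal.typein (α := κ.ord.ToType) (· < ·) a.1 + 1)))) ?_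
            intro x y h
            simp only [Subtype.mk.injEq] at h
            exact Subtype.ext h
        _ < κ := cardH _ h1
    rw [hG] at hsum
    have hcon := Cardinal.sum_lt_of_isRegular hreg hlt hfiblt
    rw [← hsum] at hcon
    exact absurd hcon (lt_irrefl κ)
  -- a partition of R into ℕ many pieces of full size
  have hRN : #(↥R × ℕ) = #(↥R) := by
    rw [Cardinal.mk_prod, Cardinal.mk_nat, Cardinal.lift_id', Cardinal.lift_aleph0]
    exact Cardinal.mul_eq_left (by rw [hmkR]; exact hreg.aleph0_le) (by rw [hmkR]; exact hreg.aleph0_le)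
      Cardinal.aleph0_ne_zero
  obtain ⟨φ⟩ : Nonempty (↥R ≃ ↥R × ℕ) := Cardinal.eq.1 hRN.symm
  set f : G → ℝ := fun x => ((φ (fib x)).2 : ℝ) with hf
  have hfconst : ∀ {g x : G}, rnk (g * x) = rnk x → f (g * x) = f x := by
    intro g x h
    have : fib (g * x) = fib x := by
      apply Subtype.ext
      show rT (g * x) = rT x
      rw [hrT]
      exact congrArg _ (Subtype.ext h)
    show ((φ (fib (g * x))).2 : ℝ) = ((φ (fib x)).2 : ℝ)
    rw [this]
  refine ⟨f, ?_, ?_⟩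
  · -- slowly oscillating
    intro F hF ε hε
    set β : Ordinal := ⨆ g : ↥F, (idx g.1 + 1) with hβdef
    have hβ : β < κ.ord := by
      refine Cardinal.iSup_lt_ord_of_isRegular hreg hF (fun g => ?_)
      rw [Ordinal.add_one_eq_succ]
      exact hlim.succ_lt (hidx g.1)
    have hgβ : ∀ g ∈ F, idx g < β := by
      intro g hg
      exact lt_of_lt_of_le (hsucc (idx g))
        (le_ciSup (Ordinal.bddAbove_range _) (⟨g, hg⟩ : ↥F))
    refine ⟨(H β : Set G), cardH β hβ, ?_⟩
    intro x hx a ha b hb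
    have hclose : ∀ c ∈ grpBall F x, f c = f x := by
      intro c hc
      rcases hc with rfl | ⟨g, hg, rfl⟩
      · rfl
      · exact hfconst (lemeq (Subgroup.subset_closure (hgβ g hg)) hx)
    rw [hclose a ha, hclose b hb]
    simpa using hε
  · -- unbounded
    intro B hB C
    obtain ⟨n, hn⟩ := exists_nat_gt C
    have hinj1 : Function.Injective (fun a : ↥R => φ.symm (a, n)) := by
      intro a b h
      have h2 := φ.symm.injective h
      exact (Prod.ext_iff.1 h2).1
    set S : Set G := {x : G | (φ (fib x)).2 = n} with hS
    have hmkS : κ ≤ #S := by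
      have hmap : ∀ a : ↥R, ∃ x : G, rT x = (φ.symm (a, n)).1 := fun a => (φ.symm (a, n)).2
      choose ψ hψ using hmap
      have hψS : ∀ a, ψ a ∈ S := by
        intro a
        have : fib (ψ a) = φ.symm (a, n) := Subtype.ext (hψ a)
        show (φ (fib (ψ a))).2 = n
        rw [this, Equiv.apply_symm_apply]
      have hψinj : Function.Injective (fun a => (⟨ψ a, hψS a⟩ : ↥S)) := by
        intro a b h
        have h' : ψ a = ψ b := congrArg Subtype.val h
        have : φ.symm (a, n) = φ.symm (b, n) := by
          apply Subtype.ext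
          rw [← hψ a, ← hψ b, h']
        exact hinj1 this
      calc κ = #R := hmkR.symm
        _ ≤ #S := mk_le_of_injective hψinj
    obtain ⟨x, hxS, hxB⟩ : ∃ x, x ∈ S ∧ x ∉ B := by
      by_contra hcon
      push_neg at hcon
      have : #S ≤ #B := Cardinal.mk_le_mk_of_subset hcon
      exact absurd ((hmkS.trans this).trans_lt hB) (lt_irrefl κ)
    refine ⟨x, hxB, ?_⟩
    have : f x = n := by
      rw [hf]
      exact_mod_cast congrArg _ hxS
    rw [this]
    calc C < (n : ℝ) := hn
      _ ≤ |(n : ℝ)| := le_abs_self _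

private theorem caseB {G : Type u} [Group G] (hG : Cardinal.mk G = Cardinal.aleph0) :
    ∃ f : G → ℝ,
      (∀ F : Set G, Cardinal.mk F < Cardinal.aleph0 → ∀ ε : ℝ, 0 < ε →
        ∃ B : Set G, Cardinal.mk B < Cardinal.aleph0 ∧
          ∀ x ∉ B, ∀ a ∈ grpBall F x, ∀ b ∈ grpBall F x, |f a - f b| < ε) ∧
      (∀ B : Set G, Cardinal.mk B < Cardinal.aleph0 → ∀ C : ℝ, ∃ x : G, x ∉ B ∧ C < |f x|) := by
  classical
  haveI : Infinite G := Cardinal.infinite_iff.2 (by rw [hG])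
  haveI : Countable G := Cardinal.mk_le_aleph0_iff.1 (by rw [hG])
  obtain ⟨d⟩ : Nonempty (Denumerable G) := nonempty_denumerable G
  let e : G ≃ ℕ := @Denumerable.eqv G d
  -- growing finite generating sets
  set T : ℕ → Set G := fun n => {y | e y < n} with hT
  have hTfin : ∀ n, (T n).Finite := fun n =>
    (Set.finite_Iio n).preimage (e.injective.injOn)
  have hTmono : ∀ {m n : ℕ}, m ≤ n → T m ⊆ T n := fun h y hy => lt_of_lt_of_le hy h
  -- bounded-length words
  set P : ℕ → Set G := fun n =>
    (fun l : List G => l.prod) '' {l | l.length ≤ n ∧ ∀ y ∈ l, y ∈ T n ∨ y⁻¹ ∈ T n} with hP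
  have hPmono : ∀ {m n : ℕ}, m ≤ n → P m ⊆ P n := by
    intro m n h z hz
    obtain ⟨l, ⟨h1, h2⟩, rfl⟩ := hz
    exact ⟨l, ⟨h1.trans h, fun y hy => (h2 y hy).imp (fun t => hTmono h t) (fun t => hTmono h t)⟩, rfl⟩
  have hPfin : ∀ n, (P n).Finite := by
    intro n
    set D : Set G := {y | y ∈ T n ∨ y⁻¹ ∈ T n} with hD
    have hDfin : D.Finite := by
      have : D = T n ∪ (fun y : G => y⁻¹) ⁻¹' (T n) := rfl
      rw [this]
      exact (hTfin n).union ((hTfin n).preimage (fun a _ b _ h => inv_injective h))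
    haveI := hDfin.to_subtype
    have hlists : {l : List ↥D | l.length ≤ n}.Finite := List.finite_length_le _ n
    refine (((hlists.image (fun l => l.map Subtype.val)).image List.prod)).subset ?_
    rintro z ⟨l, ⟨hlen, hent⟩, rfl⟩
    refine ⟨l, ⟨l.attachWith (· ∈ D) hent, by simpa using hlen, by simp⟩, rfl⟩
  have hex : ∀ x : G, ∃ n, x ∈ P n := by
    intro x
    refine ⟨e x + 1, [x], ⟨by simp, ?_⟩, by simp⟩
    intro y hy
    simp only [List.mem_singleton] at hy
    subst hy
    exact Or.inl (Nat.lt_succ_self _)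
  set ℓ : G → ℕ := fun x => Nat.find (hex x) with hℓ
  have hℓspec : ∀ x, x ∈ P (ℓ x) := fun x => Nat.find_spec (hex x)
  have hℓmin : ∀ {x n}, x ∈ P n → ℓ x ≤ n := fun h => Nat.find_le h
  have hℓgt : ∀ {x n}, x ∉ P n → n < ℓ x := by
    intro x n h
    by_contra hc
    exact h (hPmono (not_lt.1 hc) (hℓspec x))
  have hkey : ∀ (g x : G) (m : ℕ), (g ∈ T m ∨ g⁻¹ ∈ T m) → ℓ (g * x) ≤ max m (ℓ x) + 1 := by
    intro g x m hg
    obtain ⟨l, ⟨h1, h2⟩, h3⟩ := hℓspec x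
    refine hℓmin ⟨g :: l, ⟨?_, ?_⟩, by simp [h3]⟩
    · simpa using Nat.succ_le_succ (h1.trans (le_max_right m (ℓ x)))
    · intro y hy
      rcases List.mem_cons.1 hy with rfl | hy
      · exact hg.imp (fun t => hTmono ((le_max_left m _).trans (Nat.le_succ _)) t)
          (fun t => hTmono ((le_max_left m _).trans (Nat.le_succ _)) t)
      · exact (h2 y hy).imp
          (fun t => hTmono ((le_max_right m _).trans (Nat.le_succ _)) t)
          (fun t => hTmono ((le_max_right m _).trans (Nat.le_succ _)) t)
  -- harmonic sums
  set harm : ℕ → ℝ := fun n => ∑ i ∈ Finset.range n, (1 : ℝ) / (i + 1) with hharm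
  have harm_mono : Monotone harm := by
    intro a b hab
    exact Finset.sum_le_sum_of_subset_of_nonneg (Finset.range_subset_range.2 hab)
      (fun i _ _ => by positivity)
  have harm_succ : ∀ k, harm (k + 1) - harm k = 1 / (k + 1) := by
    intro k
    simp [hharm, Finset.sum_range_succ]
  have harm_unbdd : ∀ C : ℝ, ∃ n, C < harm n := by
    intro C
    obtain ⟨n, hn⟩ := (Filter.tendsto_atTop.mp Real.tendsto_sum_range_one_div_nat_succ_atTop
      (C + 1)).exists
    refine ⟨n, ?_⟩
    have h2 : harm n = ∑ i ∈ Finset.range n, (1 : ℝ) / (i + 1) := rfl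
    rw [h2]
    linarith
  have harm_nonneg : ∀ n, 0 ≤ harm n := fun n =>
    Finset.sum_nonneg fun i _ => by positivity
  refine ⟨fun x => harm (ℓ x), ?_, ?_⟩
  · -- slowly oscillating
    intro F hF ε hε
    have hFfin : F.Finite := Cardinal.lt_aleph0_iff_set_finite.1 hF
    set m : ℕ := hFfin.toFinset.sup e + 1 with hm
    have hFT : ∀ g ∈ F, g ∈ T m :=
      fun g hg => Nat.lt_succ_of_le (Finset.le_sup (hFfin.mem_toFinset.2 hg))
    obtain ⟨N, hN⟩ := exists_nat_gt (2 / ε)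
    set K : ℕ := max (m + 1) N with hK
    have hKN : (2 : ℝ) / (K + 1) < ε := by
      rw [div_lt_iff₀ (by positivity)]
      have h2 : 2 / ε < (K : ℝ) + 1 := by
        refine hN.trans_le ?_
        have : (N : ℝ) ≤ K := by exact_mod_cast le_max_right (m+1) N
        linarith
      calc (2 : ℝ) = (2 / ε) * ε := by field_simp
        _ < ((K : ℝ) + 1) * ε := by
            exact mul_lt_mul_of_pos_right h2 hε
        _ = ε * ((K : ℝ) + 1) := by ring
    refine ⟨P K, Cardinal.lt_aleph0_iff_set_finite.2 (hPfin K), ?_⟩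
    intro x hx a ha b hb
    have hxK : K < ℓ x := hℓgt hx
    have hmK : m + 1 ≤ K := le_max_left _ _
    have step : ∀ c ∈ grpBall F x, |harm (ℓ c) - harm (ℓ x)| ≤ 1 / (K + 1) := by
      intro c hc
      rcases hc with rfl | ⟨g, hg, rfl⟩
      · simp; positivity
      have hgT := hFT g hg
      have h1 : ℓ (g * x) ≤ ℓ x + 1 := by
        have := hkey g x m (Or.inl hgT)
        rwa [max_eq_right (by omega)] at this
      have h2' : ℓ x ≤ max m (ℓ (g * x)) + 1 := by
        have := hkey g⁻¹ (g * x) m (Or.inr (by simpa using hgT))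
        rwa [inv_mul_cancel_left] at this
      have hmgx : m ≤ ℓ (g * x) := by
        by_contra hcon
        rw [max_eq_left (by omega)] at h2'
        omega
      have h2 : ℓ x ≤ ℓ (g * x) + 1 := by rwa [max_eq_right hmgx] at h2'
      -- now |ℓ(gx) - ℓ x| ≤ 1 and both ≥ K
      have hdiff : ∀ p q : ℕ, K ≤ p → p ≤ q → q ≤ p + 1 → |harm q - harm p| ≤ 1 / (K + 1) := by
        intro p q hp hpq hq1
        rw [abs_of_nonneg (by linarith [harm_mono hpq])]
        rcases Nat.eq_or_lt_of_le hpq with rfl | hlt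
        · simp
          positivity
        · have hq : q = p + 1 := by omega
          subst hq
          rw [show harm (p+1) - harm p = 1 / (p+1) from harm_succ p]
          have : (K : ℝ) + 1 ≤ (p : ℝ) + 1 := by exact_mod_cast Nat.succ_le_succ hp
          exact one_div_le_one_div_of_le (by positivity) this
      rcases le_total (ℓ (g * x)) (ℓ x) with hle | hle
      · rw [abs_sub_comm]
        exact hdiff (ℓ (g * x)) (ℓ x) (by omega) hle (by omega)
      · exact hdiff (ℓ x) (ℓ (g * x)) (by omega) hle (by omega)
    calc |harm (ℓ a) - harm (ℓ b)|
        ≤ |harm (ℓ a) - harm (ℓ x)| + |harm (ℓ x) - harm (ℓ b)| := abs_sub_le _ _ _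
      _ ≤ 1 / (K + 1) + 1 / (K + 1) := by
          refine add_le_add (step a ha) ?_
          rw [abs_sub_comm]
          exact step b hb
      _ = 2 / (K + 1) := by ring
      _ < ε := hKN
  · -- unbounded
    intro B hB C
    have hBfin : B.Finite := Cardinal.lt_aleph0_iff_set_finite.1 hB
    obtain ⟨n, hn⟩ := harm_unbdd C
    obtain ⟨x, hx⟩ := (hBfin.union (hPfin n)).infinite_compl.nonempty
    rw [Set.mem_compl_iff, Set.mem_union] at hx
    push_neg at hx
    refine ⟨x, hx.1, ?_⟩
    have : n < ℓ x := hℓgt hx.2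
    calc C < harm n := hn
      _ ≤ harm (ℓ x) := harm_mono this.le
      _ ≤ |harm (ℓ x)| := le_abs_self _

/-- For an infinite regular cardinal `κ` and a group `G` of cardinality `κ`,
the `κ`-ballean of `G` is not so-bounded: there is a slowly oscillating
`f : G → ℝ` which is unbounded on `G ∖ B` for every `B` of cardinality `< κ`. -/
theorem kappa_ballean_not_soBounded {G : Type u} [Group G] (κ : Cardinal.{u})
    (hreg : κ.IsRegular) (hG : Cardinal.mk G = κ) :
    ∃ f : G → ℝ,
      (∀ F : Set G, Cardinal.mk F < κ → ∀ ε : ℝ, 0 < ε →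
        ∃ B : Set G, Cardinal.mk B < κ ∧
          ∀ x ∉ B, ∀ a ∈ grpBall F x, ∀ b ∈ grpBall F x, |f a - f b| < ε) ∧
      (∀ B : Set G, Cardinal.mk B < κ → ∀ C : ℝ, ∃ x : G, x ∉ B ∧ C < |f x|) := by
  rcases hreg.aleph0_le.eq_or_lt with heq | hlt
  · subst heq
    exact caseB hG
  · exact caseA κ hreg hG hlt
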